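/- Let n ≥ 2, let B′ ⊆ ℂ^{n−1} be the open unit ball centered at 0, and let Δ ⊆ ℂ be the open unit disc. Let 0 < θ < r < R < 1. Then there exists a constant C > 0, depending only on n, θ, r and R, such that every holomorphic function f on B′ × Δ satisfies |f(z′, z_n)|² ≤ C ∫_{B′ × {w ∈ ℂ : r < |w| < R}} |f|² dV for every point (z′, z_n) ∈ ℂ^{n−1} × ℂ with |z′| ≤ θ and |z_n| ≤ θ. (This sup-by-L²-on-an-annular-region estimate, via the Cauchy integral formula in the last variable, is the final estimate in the paper's proof of Theorem 1.2.) -/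

import Mathlib

open MeasureTheory Metric Complex Set ENNReal

noncomputable section

/-- Lebesgue measure on `ℂⁿ` (with its Euclidean metric structure). -/
noncomputable instance (n : ℕ) : MeasureSpace (EuclideanSpace ℂ (Fin n)) :=
  { toMeasurableSpace := inferInstance
    volume := Measure.map (WithLp.toLp 2) (volume : Measure (Fin n → ℂ)) }

instance (n : ℕ) : BorelSpace (EuclideanSpace ℂ (Fin n)) :=
  inferInstanceAs (BorelSpace (PiLp 2 (fun _ : Fin n => ℂ)))

/-- The canonical extension of a nonpositive-infinity-allowing value to `ℝ≥0∞`: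
`⊤ ↦ ⊤`, `⊥ ↦ 0`, reals to `ENNReal.ofReal`. -/
def EReal.toENNReal' (x : EReal) : ℝ≥0∞ :=
  if x = ⊤ then ⊤ else ENNReal.ofReal x.toReal

/-- The integral of an `EReal`-valued function: upper part minus lower part,
computed with Lebesgue upper integrals and `EReal` subtraction. -/
def eIntegral {α : Type*} [MeasurableSpace α] (μ : Measure α) (f : α → EReal) : EReal :=
  ((∫⁻ a, (f a).toENNReal' ∂μ : ℝ≥0∞) : EReal) - ((∫⁻ a, (-(f a)).toENNReal' ∂μ : ℝ≥0∞) : EReal)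

/-- `e^x ∈ [0,∞]` for `x ∈ [-∞,∞]`. -/
def eexp (x : EReal) : ℝ≥0∞ :=
  if x = ⊤ then ⊤ else if x = ⊥ then 0 else ENNReal.ofReal (Real.exp x.toReal)

/-- A function `u : ℂⁿ → [-∞,∞)` is plurisubharmonic on an open set `U` if it is
upper semicontinuous on `U`, takes the value `⊤` nowhere on `U`, is not identically `⊥`
on any connected component of `U`, and satisfies the sub-mean value inequality on every
sufficiently small circle in every complex direction. -/
def IsPSH {n : ℕ} (U : Set (EuclideanSpace ℂ (Fin n))) (u : EuclideanSpace ℂ (Fin n) → EReal) :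
    Prop :=
  UpperSemicontinuousOn u U ∧
  (∀ x ∈ U, u x ≠ ⊤) ∧
  (∀ x ∈ U, ∃ y ∈ connectedComponentIn U x, u y ≠ ⊥) ∧
  ∀ a ∈ U, ∀ b : EuclideanSpace ℂ (Fin n), ∃ r₀ > (0:ℝ), ∀ r : ℝ, 0 < r → r < r₀ →
    (∀ θ : ℝ, a + ((r : ℂ) * Complex.exp (θ * Complex.I)) • b ∈ U) ∧
    u a ≤ (((2 * Real.pi)⁻¹ : ℝ) : EReal) *
      eIntegral (volume.restrict (Set.Ioc (0:ℝ) (2 * Real.pi)))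
        (fun θ : ℝ => u (a + ((r : ℂ) * Complex.exp (θ * Complex.I)) • b))

/-- A set `E`, closed in an open set `Ω ⊆ ℂⁿ`, is complete pluripolar in `Ω` if every point
of `E` has an open neighborhood `U ⊆ Ω` carrying a plurisubharmonic function `φ` with
`E ∩ U = φ⁻¹(-∞)`. -/
def CompletePluripolarIn {n : ℕ} (Ω E : Set (EuclideanSpace ℂ (Fin n))) : Prop :=
  ∀ x ∈ E, ∃ U : Set (EuclideanSpace ℂ (Fin n)), IsOpen U ∧ x ∈ U ∧ U ⊆ Ω ∧
    ∃ φ : EuclideanSpace ℂ (Fin n) → EReal, IsPSH U φ ∧ E ∩ U = {y ∈ U | φ y = ⊥}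

/-- A bounded pseudoconvex domain in `ℂⁿ`: a bounded nonempty connected open set on which
`z ↦ -log dist(z, ℂⁿ ∖ Ω)` is plurisubharmonic. -/
def BoundedPseudoconvexDomain {n : ℕ} (Ω : Set (EuclideanSpace ℂ (Fin n))) : Prop :=
  IsOpen Ω ∧ IsConnected Ω ∧ Bornology.IsBounded Ω ∧
  IsPSH Ω (fun z => ((-Real.log (Metric.infDist z Ωᶜ) : ℝ) : EReal))

/-- The Levi form of a real-valued function `u` on `ℂⁿ` at `x` in direction `v`:
`(1/4)` times the Laplacian at `w = 0` of `w ↦ u (x + w v)`. -/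
def Levi {n : ℕ} (u : EuclideanSpace ℂ (Fin n) → ℝ) (x v : EuclideanSpace ℂ (Fin n)) : ℝ :=
  ((fderiv ℝ (fun w : ℂ => fderiv ℝ (fun w' : ℂ => u (x + w' • v)) w) 0) 1 1 +
   (fderiv ℝ (fun w : ℂ => fderiv ℝ (fun w' : ℂ => u (x + w' • v)) w) 0) Complex.I Complex.I) / 4

/-- The `(1,0)`-differential `∂u(x)(v) = Σⱼ (∂u/∂zⱼ)(x) vⱼ` of a real-valued function `u`
on `ℂⁿ`, computed as `∂g/∂w (0) = (1/2)(∂ₓg - i ∂_y g)(0)` for `g(w) = u(x + w v)`. -/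
def del1 {n : ℕ} (u : EuclideanSpace ℂ (Fin n) → ℝ) (x v : EuclideanSpace ℂ (Fin n)) : ℂ :=
  (((fderiv ℝ (fun w : ℂ => u (x + w • v)) 0) 1 : ℝ) -
    Complex.I * ((fderiv ℝ (fun w : ℂ => u (x + w • v)) 0) Complex.I : ℝ)) / 2

open Real

instance (k : ℕ) : SigmaFinite (volume : Measure (EuclideanSpace ℂ (Fin k))) :=
  (MeasurableEquiv.toLp 2 (Fin k → ℂ)).sigmaFinite_map

lemma circ_lower (g : ℂ → ℂ) (s : ℝ) (hs : 0 < s) (w : ℂ) (hw : ‖w‖ < s)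
    (hg : DifferentiableOn ℂ g (closedBall 0 s)) :
    2 * π * (s - ‖w‖) * ‖g w‖ ≤ ∫ t in Ioo (-π) π, s * ‖g (circleMap 0 s t)‖ := by
  have hws : w ∈ ball (0:ℂ) s := by simpa [mem_ball, dist_eq_norm] using hw
  have hcauchy := hg.circleIntegral_sub_inv_smul hws
  have hgc : ContinuousOn g (closedBall 0 s) := hg.continuousOn
  have hmem : ∀ t : ℝ, circleMap 0 s t ∈ closedBall (0:ℂ) s := fun t => by
    simp [circleMap, abs_of_pos hs, Complex.norm_exp]
  have hnorm : ∀ t : ℝ, ‖circleMap 0 s t‖ = s := fun t => by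
    simp [circleMap, abs_of_pos hs, Complex.norm_exp]
  have hcont : Continuous fun t => ‖g (circleMap 0 s t)‖ :=
    ((hgc.comp_continuous (continuous_circleMap 0 s) hmem).norm)
  have hsw : 0 < s - ‖w‖ := by linarith
  have hne : ∀ t : ℝ, circleMap 0 s t - w ≠ 0 := by
    intro t h
    have : ‖circleMap 0 s t‖ = ‖w‖ := by rw [sub_eq_zero] at h; rw [h]
    rw [hnorm t] at this; linarith
  have hlow : ∀ t : ℝ, s - ‖w‖ ≤ ‖circleMap 0 s t - w‖ := fun t => by
    have := norm_sub_norm_le (circleMap 0 s t) w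
    rw [hnorm t] at this; linarith
  have h1 : ‖∮ z in C(0, s), (z - w)⁻¹ • g z‖ ≤
      ∫ t in (0:ℝ)..2*π, s / (s - ‖w‖) * ‖g (circleMap 0 s t)‖ := by
    rw [circleIntegral]
    refine (intervalIntegral.norm_integral_le_integral_norm (by positivity)).trans ?_
    refine intervalIntegral.integral_mono_on (μ := volume) (by positivity) ?_ ?_ ?_
    · have hd : Continuous fun θ : ℝ => deriv (circleMap 0 s) θ := by
        simp only [deriv_circleMap]; exact (continuous_circleMap 0 s).mul continuous_const
      have hcA : Continuous fun θ : ℝ =>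
          ‖deriv (circleMap 0 s) θ • ((circleMap 0 s θ - w)⁻¹ • g (circleMap 0 s θ))‖ :=
        (hd.smul (((continuous_circleMap 0 s).sub continuous_const).inv₀ hne |>.smul
          (hgc.comp_continuous (continuous_circleMap 0 s) hmem))).norm
      exact hcA.intervalIntegrable (μ := volume) _ _
    · exact (continuous_const.mul hcont).intervalIntegrable (μ := volume) _ _
    · intro t _
      rw [norm_smul, norm_smul, deriv_circleMap, norm_mul, Complex.norm_I, mul_one,
        hnorm t, norm_inv, div_eq_mul_inv, mul_assoc]
      gcongr
      · exact hlow t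
  have h2 : ‖∮ z in C(0, s), (z - w)⁻¹ • g z‖ = 2 * π * ‖g w‖ := by
    rw [hcauchy, norm_smul]
    simp [Complex.norm_of_nonneg pi_pos.le, Real.pi_nonneg]
  rw [intervalIntegral.integral_const_mul] at h1
  rw [h2] at h1
  have hdiv : (s - ‖w‖) * (s / (s - ‖w‖)) = s := by
    rw [mul_comm]; exact div_mul_cancel₀ s hsw.ne'
  have h3 : 2 * π * (s - ‖w‖) * ‖g w‖ ≤ s * ∫ t in (0:ℝ)..2*π, ‖g (circleMap 0 s t)‖ := by
    have h4 := mul_le_mul_of_nonneg_left h1 hsw.le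
    calc 2 * π * (s - ‖w‖) * ‖g w‖ = (s - ‖w‖) * (2 * π * ‖g w‖) := by ring
    _ ≤ (s - ‖w‖) * (s / (s - ‖w‖) * ∫ t in (0:ℝ)..2*π, ‖g (circleMap 0 s t)‖) := h4
    _ = (s - ‖w‖) * (s / (s - ‖w‖)) * ∫ t in (0:ℝ)..2*π, ‖g (circleMap 0 s t)‖ := by ring
    _ = s * ∫ t in (0:ℝ)..2*π, ‖g (circleMap 0 s t)‖ := by rw [hdiv]
  have per : (fun t => s * ‖g (circleMap 0 s t)‖).Periodic (2*π) := fun t => by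
    simp [periodic_circleMap 0 s t]
  have hpi : -π + 2*π = π := by ring
  have hshift : (∫ t in (0:ℝ)..2*π, s * ‖g (circleMap 0 s t)‖)
      = ∫ t in (-π)..π, s * ‖g (circleMap 0 s t)‖ := by
    have h5 := per.intervalIntegral_add_eq 0 (-π)
    rw [zero_add, hpi] at h5
    exact h5
  calc 2 * π * (s - ‖w‖) * ‖g w‖ ≤ s * ∫ t in (0:ℝ)..2*π, ‖g (circleMap 0 s t)‖ := h3
  _ = ∫ t in (0:ℝ)..2*π, s * ‖g (circleMap 0 s t)‖ := by
      rw [intervalIntegral.integral_const_mul]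
  _ = ∫ t in (-π)..π, s * ‖g (circleMap 0 s t)‖ := hshift
  _ = ∫ t in Ioc (-π) π, s * ‖g (circleMap 0 s t)‖ := by
      rw [intervalIntegral.integral_of_le (by linarith [pi_pos])]
  _ = ∫ t in Ioo (-π) π, s * ‖g (circleMap 0 s t)‖ := by
      rw [integral_Ioc_eq_integral_Ioo]

lemma ann_lower (g : ℂ → ℂ) (b₁ a b : ℝ) (ha : 0 ≤ a) (hab : a < b) (hb : b < b₁)
    (hg : DifferentiableOn ℂ g (ball 0 b₁)) (c₁ : ℝ)
    (key : ∀ s ∈ Ioo a b, c₁ ≤ ∫ t in Ioo (-π) π, s * ‖g (circleMap 0 s t)‖) :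
    ENNReal.ofReal (c₁ * (b - a)) ≤
      ∫⁻ z in {z : ℂ | a < ‖z‖ ∧ ‖z‖ < b}, ENNReal.ofReal ‖g z‖ := by
  have hb₁ : 0 < b₁ := lt_of_le_of_lt ha (hab.trans hb)
  set Ann : Set ℂ := {z : ℂ | a < ‖z‖ ∧ ‖z‖ < b} with hAnn
  have hAnnMeas : MeasurableSet Ann := by
    have : IsOpen Ann := (isOpen_lt continuous_const continuous_norm).inter
      (isOpen_lt continuous_norm continuous_const)
    exact this.measurableSet
  have hAnnSub : Ann ⊆ closedBall 0 b := fun z hz => by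
    simp only [mem_closedBall, dist_zero_right]; exact hz.2.le
  have hcb : closedBall (0:ℂ) b ⊆ ball 0 b₁ := closedBall_subset_ball hb
  have hgc : ContinuousOn (fun z => ‖g z‖) (closedBall 0 b) := (hg.continuousOn.mono hcb).norm
  have hInt : IntegrableOn (fun z => ‖g z‖) Ann volume :=
    (hgc.integrableOn_compact (isCompact_closedBall 0 b)).mono_set hAnnSub
  rw [← ofReal_integral_eq_lintegral_ofReal hInt
    (ae_of_all _ fun z => norm_nonneg _)]
  apply ENNReal.ofReal_le_ofReal
  -- symm of polar coords is circleMap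
  have hsymm : ∀ p : ℝ × ℝ, Complex.polarCoord.symm p = circleMap 0 p.1 p.2 := by
    intro p
    simp [Complex.polarCoord_symm_apply, circleMap, Complex.exp_mul_I, Complex.ofReal_cos,
      Complex.ofReal_sin]
  have hScont : Continuous fun p : ℝ × ℝ => Complex.polarCoord.symm p := by
    simp only [Complex.polarCoord_symm_apply]
    fun_prop
  set S : Set (ℝ × ℝ) := Ioo a b ×ˢ Ioo (-π) π with hS
  have hSmeas : MeasurableSet S := measurableSet_Ioo.prod measurableSet_Ioo
  have hSsub : S ⊆ polarCoord.target := by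
    rintro ⟨s, t⟩ ⟨h1, h2⟩
    exact ⟨lt_of_le_of_lt ha h1.1, h2⟩
  set F : ℝ × ℝ → ℝ := fun p => p.1 * ‖g (Complex.polarCoord.symm p)‖ with hFdefF
  have habs' : ∀ p : ℝ × ℝ, ‖Complex.polarCoord.symm p‖ = |p.1| := fun p => by
    exact Complex.norm_polarCoord_symm p
  have hmapsTo : ∀ p ∈ Icc a b ×ˢ Icc (-π) π, Complex.polarCoord.symm p ∈ ball (0:ℂ) b₁ := by
    rintro ⟨s, t⟩ ⟨h1, _⟩
    rw [mem_ball, dist_zero_right, habs' _, _root_.abs_of_nonneg (ha.trans h1.1)]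
    exact lt_of_le_of_lt h1.2 hb
  have hFcont : ContinuousOn F (Icc a b ×ˢ Icc (-π) π) :=
    (continuousOn_fst).mul
      (((hg.continuousOn.comp hScont.continuousOn hmapsTo)).norm)
  have hF : IntegrableOn F S volume :=
    (hFcont.integrableOn_compact (isCompact_Icc.prod isCompact_Icc)).mono_set
      (prod_mono Ioo_subset_Icc_self Ioo_subset_Icc_self)
  have hFrw : ∀ s t : ℝ, F (s, t) = s * ‖g (circleMap 0 s t)‖ := by
    intro s t; simp only [hFdefF, hsymm]
  -- Fubini for F on S
  have hFprod : Integrable F ((volume.restrict (Ioo a b)).prod (volume.restrict (Ioo (-π) π))) := by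
    rw [Measure.prod_restrict, ← Measure.volume_eq_prod]
    exact hF
  have hfub : ∫ p in S, F p = ∫ s in Ioo a b, ∫ t in Ioo (-π) π, F (s, t) := by
    rw [hS, Measure.volume_eq_prod, ← Measure.prod_restrict]
    exact MeasureTheory.integral_prod F hFprod
  -- change of variables to polar coordinates
  have base := Complex.integral_comp_polarCoord_symm (Ann.indicator fun z => ‖g z‖)
  have hcongr : ∀ p ∈ polarCoord.target,
      p.1 • (Ann.indicator (fun z => ‖g z‖) (Complex.polarCoord.symm p)) = S.indicator F p := by
    rintro ⟨s, t⟩ ⟨h1, h2⟩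
    have habs : ‖Complex.polarCoord.symm (s, t)‖ = s := by
      rw [habs' _]; exact _root_.abs_of_pos h1
    by_cases hsab : s ∈ Ioo a b
    · have h3 : Complex.polarCoord.symm (s, t) ∈ Ann := by
        rw [hAnn, mem_setOf_eq, habs]; exact ⟨hsab.1, hsab.2⟩
      have h4 : (s, t) ∈ S := ⟨hsab, h2⟩
      rw [indicator_of_mem h3, indicator_of_mem h4, smul_eq_mul]
    · have h3 : Complex.polarCoord.symm (s, t) ∉ Ann := by
        rw [hAnn, mem_setOf_eq, habs]; exact fun h => hsab ⟨h.1, h.2⟩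
      have h4 : (s, t) ∉ S := fun h => hsab h.1
      rw [indicator_of_notMem h3, indicator_of_notMem h4, smul_zero]
  calc c₁ * (b - a) = ∫ _ in Ioo a b, c₁ ∂volume := by
        rw [setIntegral_const, Real.volume_real_Ioo_of_le hab.le,
          smul_eq_mul, mul_comm]
    _ ≤ ∫ s in Ioo a b, ∫ t in Ioo (-π) π, F (s, t) := by
        apply setIntegral_mono_on (integrableOn_const (by
          rw [Real.volume_Ioo]; exact ENNReal.ofReal_ne_top)) _ measurableSet_Ioo
        · intro s hs
          have := key s hs
          simp only [hFrw]
          exact this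
        · exact hFprod.integral_prod_left
    _ = ∫ p in S, F p := hfub.symm
    _ = ∫ p in polarCoord.target ∩ S, F p := by rw [inter_eq_self_of_subset_right hSsub]
    _ = ∫ p in polarCoord.target, S.indicator F p := (setIntegral_indicator hSmeas).symm
    _ = ∫ p in polarCoord.target,
          p.1 • (Ann.indicator (fun z => ‖g z‖) (Complex.polarCoord.symm p)) := by
        exact (setIntegral_congr_fun polarCoord.open_target.measurableSet hcongr).symm
    _ = ∫ z, Ann.indicator (fun z => ‖g z‖) z := base
    _ = ∫ z in Ann, ‖g z‖ := integral_indicator hAnnMeas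

lemma disc_lower (g : ℂ → ℂ) (c : ℂ) (ρ δ : ℝ) (h0 : 0 < ρ) (hρδ : ρ < δ)
    (hg : DifferentiableOn ℂ g (ball c δ)) :
    ENNReal.ofReal (π * ρ ^ 2 / 2 * ‖g c‖) ≤ ∫⁻ z in ball c ρ, ENNReal.ofReal ‖g z‖ := by
  have hδ : 0 < δ := h0.trans hρδ
  set g₀ : ℂ → ℂ := fun z => g (c + z) with hg₀def
  have hg₀ : DifferentiableOn ℂ g₀ (ball 0 δ) := by
    apply hg.comp ((differentiable_const c).add differentiable_id).differentiableOn
    intro z hz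
    simpa [mem_ball, dist_eq_norm, add_sub_cancel_left] using hz
  have key : ∀ s ∈ Ioo (ρ/2) ρ, π * ρ * ‖g c‖ ≤
      ∫ t in Ioo (-π) π, s * ‖g₀ (circleMap 0 s t)‖ := by
    intro s hs
    have hs0 : 0 < s := (show (0:ℝ) < ρ/2 by positivity).trans hs.1
    have h1 := circ_lower g₀ s hs0 0 (by simpa using hs0)
      (hg₀.mono (closedBall_subset_ball (hs.2.trans hρδ)))
    have h2 : g₀ 0 = g c := by simp [hg₀def]
    rw [h2, norm_zero, sub_zero] at h1
    have hπ : π * ρ ≤ 2 * π * s := by nlinarith [pi_pos, hs.1]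
    calc π * ρ * ‖g c‖ ≤ 2 * π * s * ‖g c‖ := mul_le_mul_of_nonneg_right hπ (norm_nonneg _)
    _ ≤ _ := h1
  have h3 := ann_lower g₀ δ (ρ/2) ρ (by positivity) (by linarith) hρδ hg₀ (π * ρ * ‖g c‖) key
  have h4 : ENNReal.ofReal (π * ρ ^ 2 / 2 * ‖g c‖) = ENNReal.ofReal (π * ρ * ‖g c‖ * (ρ - ρ/2)) := by
    congr 1; ring
  rw [h4]
  refine h3.trans ?_
  have hsub : {z : ℂ | ρ/2 < ‖z‖ ∧ ‖z‖ < ρ} ⊆ ball (0:ℂ) ρ := fun z hz => by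
    simpa [mem_ball, dist_zero_right] using hz.2
  refine (lintegral_mono_set hsub).trans ?_
  -- translation
  have hmp : MeasurePreserving (fun z : ℂ => c + z) volume volume :=
    measurePreserving_add_left volume c
  have hemb : MeasurableEmbedding (fun z : ℂ => c + z) :=
    (MeasurableEquiv.addLeft c).measurableEmbedding
  have himg : (fun z : ℂ => c + z) '' (ball 0 ρ) = ball c ρ := by
    ext z
    simp only [mem_image, mem_ball, dist_eq_norm, dist_zero_right]
    constructor
    · rintro ⟨y, hy, rfl⟩; simpa [add_sub_cancel_left] using hy
    · intro h; exact ⟨z - c, by simpa [norm_sub_rev] using h, by ring⟩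
  have heq := hmp.setLIntegral_comp_emb hemb (fun z => ENNReal.ofReal ‖g z‖) (ball 0 ρ)
  rw [himg] at heq
  rw [← heq]

lemma polydisc_lower : ∀ (m : ℕ) (g : (Fin m → ℂ) → ℂ) (c : Fin m → ℂ) (ρ δ : ℝ),
    0 < ρ → ρ < δ →
    DifferentiableOn ℂ g {u : Fin m → ℂ | ∀ i, u i ∈ ball (c i) δ} →
    ENNReal.ofReal ((π * ρ ^ 2 / 2) ^ m * ‖g c‖) ≤
      ∫⁻ u in {u : Fin m → ℂ | ∀ i, u i ∈ ball (c i) ρ}, ENNReal.ofReal ‖g u‖ := by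
  intro m
  induction m with
  | zero =>
    intro g c ρ δ h0 hρδ hg
    have h1 : {u : Fin 0 → ℂ | ∀ i, u i ∈ ball (c i) ρ} = univ := by
      ext u; simp
    have h2 : ∀ u : Fin 0 → ℂ, g u = g c := fun u => by
      congr 1; exact Subsingleton.elim u c
    rw [h1, Measure.restrict_univ, pow_zero, one_mul]
    refine le_of_eq ?_
    calc ENNReal.ofReal ‖g c‖ = ∫⁻ _ : Fin 0 → ℂ, ENNReal.ofReal ‖g c‖ := by
          rw [lintegral_const]
          have : (volume : Measure (Fin 0 → ℂ)) univ = 1 := by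
            rw [volume_pi, Measure.pi_univ]; simp
          rw [this, mul_one]
    _ = ∫⁻ u, ENNReal.ofReal ‖g u‖ := by
          apply lintegral_congr; intro u; rw [h2 u]
  | succ m ih =>
    intro g c ρ δ h0 hρδ hg
    set e := MeasurableEquiv.piFinSuccAbove (fun _ : Fin (m+1) => ℂ) 0 with he
    set c' : Fin m → ℂ := fun j => c j.succ with hc'
    set s : Set ℂ := ball (c 0) ρ with hsdef
    set T : Set (Fin m → ℂ) := {v : Fin m → ℂ | ∀ j, v j ∈ ball (c' j) ρ} with hT
    have hTpi : T = univ.pi (fun j : Fin m => ball (c' j) ρ) := by ext v; simp [hT]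
    have hPD : {u : Fin (m+1) → ℂ | ∀ i, u i ∈ ball (c i) ρ}
        = univ.pi (fun i : Fin (m+1) => ball (c i) ρ) := by ext u; simp
    rw [hPD]
    have hsuccAb : ∀ j : Fin m, j.succ = Fin.succAbove 0 j := by
      intro j; rw [Fin.succAbove_zero]
    have hez : ∀ (z : ℂ) (v : Fin m → ℂ) , (e.symm (z, v)) 0 = z := by
      intro z v
      simp only [he, MeasurableEquiv.piFinSuccAbove_symm_apply, Fin.insertNthEquiv_apply, Fin.insertNth_apply_same]
    have hesucc : ∀ (z : ℂ) (v : Fin m → ℂ) (j : Fin m), (e.symm (z, v)) j.succ = v j := by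
      intro z v j
      rw [hsuccAb j]
      simp only [he, MeasurableEquiv.piFinSuccAbove_symm_apply, Fin.insertNthEquiv_apply, Fin.insertNth_apply_succAbove]
    -- preimage of product set
    have hpre : e ⁻¹' (s ×ˢ T) = univ.pi (fun i : Fin (m+1) => ball (c i) ρ) := by
      ext u
      simp only [mem_preimage, mem_prod, he, MeasurableEquiv.piFinSuccAbove_apply, hT, hsdef,
        mem_setOf_eq, mem_univ_pi]
      rw [Fin.forall_fin_succ]
      simp [hc', Fin.succAbove_zero, Fin.tail]
    have hez' : ∀ p : ℂ × (Fin m → ℂ), (e.symm p) 0 = p.1 := fun p => hez p.1 p.2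
    have hesucc' : ∀ (p : ℂ × (Fin m → ℂ)) (j : Fin m), (e.symm p) j.succ = p.2 j :=
      fun p j => hesucc p.1 p.2 j
    have hTmeas : MeasurableSet T := by
      rw [hTpi]; exact MeasurableSet.univ_pi (fun j => measurableSet_ball)
    have hsmeas : MeasurableSet s := measurableSet_ball
    have hstT : MeasurableSet (s ×ˢ T) := hsmeas.prod hTmeas
    have mp0 : MeasurePreserving e (volume : Measure (Fin (m+1) → ℂ))
        (volume : Measure (ℂ × (Fin m → ℂ))) :=
      volume_preserving_piFinSuccAbove (fun _ : Fin (m+1) => ℂ) 0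
    have mp := mp0.restrict_preimage_emb e.measurableEmbedding (s ×ˢ T)
    have step1 : ∫⁻ u in univ.pi (fun i : Fin (m+1) => ball (c i) ρ), ENNReal.ofReal ‖g u‖
        = ∫⁻ p in s ×ˢ T, ENNReal.ofReal ‖g (e.symm p)‖ := by
      rw [← hpre]
      have h5 := mp.lintegral_comp_emb e.measurableEmbedding
        (fun p => ENNReal.ofReal ‖g (e.symm p)‖)
      rw [← h5]
      apply lintegral_congr
      intro u
      rw [MeasurableEquiv.symm_apply_apply]
    -- membership
    have hmem : ∀ z : ℂ, z ∈ ball (c 0) δ → ∀ v : Fin m → ℂ, (∀ j, v j ∈ ball (c' j) δ) →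
        ∀ i, (e.symm (z, v)) i ∈ ball (c i) δ := by
      intro z hz v hv i
      induction i using Fin.cases with
      | zero => rw [hez]; exact hz
      | succ j => rw [hesucc]; exact hv j
    -- differentiability of sections
    have hφdiff : ∀ z : ℂ, Differentiable ℂ (fun v : Fin m → ℂ => e.symm (z, v)) := by
      intro z
      rw [differentiable_pi]
      intro i
      induction i using Fin.cases with
      | zero =>
        simp only [hez]
        exact differentiable_const z
      | succ j =>
        simp only [hesucc]
        exact (ContinuousLinearMap.proj j : (Fin m → ℂ) →L[ℂ] ℂ).differentiable
    have hψdiff : Differentiable ℂ (fun z : ℂ => e.symm (z, c')) := by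
      rw [differentiable_pi]
      intro i
      induction i using Fin.cases with
      | zero =>
        simp only [hez]
        exact differentiable_id
      | succ j =>
        simp only [hesucc]
        exact differentiable_const _
    -- inner estimate via ih
    have key : ∀ z ∈ s, ENNReal.ofReal ((π * ρ ^ 2 / 2) ^ m * ‖g (e.symm (z, c'))‖) ≤
        ∫⁻ v in T, ENNReal.ofReal ‖g (e.symm (z, v))‖ := by
      intro z hz
      refine ih (fun v => g (e.symm (z, v))) c' ρ δ h0 hρδ ?_
      apply hg.comp ((hφdiff z).differentiableOn)
      intro v hv
      exact hmem z (ball_subset_ball hρδ.le hz) v (fun j => hv j)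
    -- continuity / measurability for Tonelli
    have E2 : Continuous (fun p : ℂ × (Fin m → ℂ) => e.symm p) := by
      apply continuous_pi
      intro i
      induction i using Fin.cases with
      | zero =>
        simp only [hez']
        exact continuous_fst
      | succ j =>
        simp only [hesucc']
        exact (continuous_apply j).comp continuous_snd
    have hmaps : MapsTo (fun p : ℂ × (Fin m → ℂ) => e.symm p) (s ×ˢ T)
        {u : Fin (m+1) → ℂ | ∀ i, u i ∈ ball (c i) δ} := by
      rintro ⟨z, v⟩ ⟨hz, hv⟩
      exact hmem z (ball_subset_ball hρδ.le hz) v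
        (fun j => ball_subset_ball hρδ.le (hv j))
    have hFcont : ContinuousOn (fun p : ℂ × (Fin m → ℂ) => ‖g (e.symm p)‖) (s ×ˢ T) :=
      (hg.continuousOn.comp E2.continuousOn hmaps).norm
    have hFae : AEMeasurable (fun p : ℂ × (Fin m → ℂ) => ENNReal.ofReal ‖g (e.symm p)‖)
        ((volume.restrict s).prod (volume.restrict T)) := by
      rw [Measure.prod_restrict, ← Measure.volume_eq_prod]
      exact ENNReal.measurable_ofReal.comp_aemeasurable (hFcont.aemeasurable hstT)
    have step2 : ∫⁻ p in s ×ˢ T, ENNReal.ofReal ‖g (e.symm p)‖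
        = ∫⁻ z in s, ∫⁻ v in T, ENNReal.ofReal ‖g (e.symm (z, v))‖ := by
      rw [Measure.volume_eq_prod, ← Measure.prod_restrict]
      exact lintegral_prod _ hFae
    -- outer function
    have hqdiff : DifferentiableOn ℂ (fun z : ℂ => g (e.symm (z, c'))) (ball (c 0) δ) := by
      apply hg.comp hψdiff.differentiableOn
      intro z hz
      exact hmem z hz c' (fun j => mem_ball_self (h0.trans hρδ))
    have hqc : (e.symm ((c 0), c')) = c := by
      funext i
      induction i using Fin.cases with
      | zero => rw [hez]
      | succ j => rw [hesucc]
    have hdisc := disc_lower (fun z : ℂ => g (e.symm (z, c'))) (c 0) ρ δ h0 hρδ hqdiff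
    rw [hqc] at hdisc
    -- assemble
    rw [step1, step2]
    have hA : (0:ℝ) ≤ (π * ρ ^ 2 / 2) ^ m := by positivity
    calc ENNReal.ofReal ((π * ρ ^ 2 / 2) ^ (m+1) * ‖g c‖)
        = ENNReal.ofReal ((π * ρ ^ 2 / 2) ^ m) * ENNReal.ofReal (π * ρ ^ 2 / 2 * ‖g c‖) := by
          rw [← ENNReal.ofReal_mul hA]; congr 1; ring
      _ ≤ ENNReal.ofReal ((π * ρ ^ 2 / 2) ^ m) * ∫⁻ z in s, ENNReal.ofReal ‖g (e.symm (z, c'))‖ := by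
          exact mul_le_mul_right hdisc _
      _ = ∫⁻ z in s, ENNReal.ofReal ((π * ρ ^ 2 / 2) ^ m) * ENNReal.ofReal ‖g (e.symm (z, c'))‖ := by
          rw [lintegral_const_mul' _ _ ENNReal.ofReal_ne_top]
      _ = ∫⁻ z in s, ENNReal.ofReal ((π * ρ ^ 2 / 2) ^ m * ‖g (e.symm (z, c'))‖) := by
          apply lintegral_congr
          intro z
          rw [ENNReal.ofReal_mul hA]
      _ ≤ ∫⁻ z in s, ∫⁻ v in T, ENNReal.ofReal ‖g (e.symm (z, v))‖ :=
          setLIntegral_mono' hsmeas key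

/-- The final estimate in the paper's proof of Theorem 1.2 (via the Cauchy integral formula in
the last variable): for `n ≥ 2` and `0 < θ < r < R < 1` there is a constant `C > 0` depending
only on `n, θ, r, R` such that every holomorphic function `f` on `B′ × Δ ⊆ ℂ^{n-1} × ℂ`
(unit ball times unit disc) satisfies
`|f(z′, zₙ)|² ≤ C ∫_{B′ × {r < |w| < R}} |f|² dV` whenever `|z′| ≤ θ` and `|zₙ| ≤ θ`. -/
theorem sup_bound_by_L2_on_annular_region
    (n : ℕ) (hn : 2 ≤ n) (θ r R : ℝ)
    (hθ : 0 < θ) (hθr : θ < r) (hrR : r < R) (hR : R < 1) :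
    ∃ C : ℝ, 0 < C ∧
      ∀ f : EuclideanSpace ℂ (Fin (n - 1)) × ℂ → ℂ,
        DifferentiableOn ℂ f
          (Metric.ball (0 : EuclideanSpace ℂ (Fin (n - 1))) 1 ×ˢ Metric.ball (0 : ℂ) 1) →
        ∀ z' : EuclideanSpace ℂ (Fin (n - 1)), ‖z'‖ ≤ θ → ∀ w : ℂ, ‖w‖ ≤ θ →
          ENNReal.ofReal (‖f (z', w)‖ ^ 2) ≤
            ENNReal.ofReal C *
              ∫⁻ p in (Metric.ball (0 : EuclideanSpace ℂ (Fin (n - 1))) 1 ×ˢ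
                  {w : ℂ | r < ‖w‖ ∧ ‖w‖ < R}),
                ENNReal.ofReal (‖f p‖ ^ 2) := by
  have hθ1 : θ < 1 := hθr.trans (hrR.trans hR)
  have h1θ : 0 < 1 - θ := by linarith
  set δ : ℝ := (1 - θ) / (((n-1 : ℕ) : ℝ) + 1) with hδdef
  have hδ : 0 < δ := by positivity
  set ρ : ℝ := δ / 2 with hρdef
  have hρ : 0 < ρ := by positivity
  have hρδ : ρ < δ := by rw [hρdef]; linarith
  set P : ℝ := (π * ρ ^ 2 / 2) ^ (n-1 : ℕ) with hP
  have hPpos : 0 < P := by positivity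
  have hrθ : 0 < r - θ := by linarith
  have hRr : 0 < R - r := by linarith
  set K : ℝ := P * (2 * π * (r - θ) * (R - r)) with hK
  have hKpos : 0 < K :=
    mul_pos hPpos (mul_pos (mul_pos (by positivity) hrθ) hRr)
  refine ⟨K⁻¹, inv_pos.2 hKpos, ?_⟩
  intro f hf z' hz' w hw
  set B' : Set (EuclideanSpace ℂ (Fin (n-1))) := Metric.ball 0 1 with hB'
  set Ann : Set ℂ := {w : ℂ | r < ‖w‖ ∧ ‖w‖ < R} with hAnn
  set h : EuclideanSpace ℂ (Fin (n-1)) × ℂ → ℂ := fun p => f p ^ 2 with hhdef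
  have hh : DifferentiableOn ℂ h (B' ×ˢ Metric.ball 0 1) := hf.pow 2
  have hnormsq : ∀ p, ENNReal.ofReal (‖f p‖ ^ 2) = ENNReal.ofReal ‖h p‖ := fun p => by
    rw [hhdef]; rw [norm_pow]
  rw [show (∫⁻ p in B' ×ˢ Ann, ENNReal.ofReal (‖f p‖^2))
      = ∫⁻ p in B' ×ˢ Ann, ENNReal.ofReal ‖h p‖ from lintegral_congr fun p => hnormsq p,
    hnormsq (z', w)]
  suffices hmain : ENNReal.ofReal (K * ‖h (z', w)‖) ≤ ∫⁻ p in B' ×ˢ Ann, ENNReal.ofReal ‖h p‖ by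
    calc ENNReal.ofReal ‖h (z', w)‖ = ENNReal.ofReal (K⁻¹ * (K * ‖h (z', w)‖)) := by
          rw [← mul_assoc, inv_mul_cancel₀ hKpos.ne', one_mul]
    _ = ENNReal.ofReal K⁻¹ * ENNReal.ofReal (K * ‖h (z', w)‖) :=
          ENNReal.ofReal_mul (by positivity)
    _ ≤ ENNReal.ofReal K⁻¹ * ∫⁻ p in B' ×ˢ Ann, ENNReal.ofReal ‖h p‖ :=
          mul_le_mul_right hmain _
  have hAnnMeas : MeasurableSet Ann :=
    ((isOpen_lt continuous_const continuous_norm).inter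
      (isOpen_lt continuous_norm continuous_const)).measurableSet
  have hAnnSub : Ann ⊆ Metric.ball (0:ℂ) 1 := fun ζ hζ => by
    rw [mem_ball, dist_zero_right]
    exact hζ.2.trans hR
  have hB'meas : MeasurableSet B' := measurableSet_ball
  have hhcont : ContinuousOn h (B' ×ˢ Metric.ball 0 1) := hh.continuousOn
  have haem : AEMeasurable (fun p : EuclideanSpace ℂ (Fin (n-1)) × ℂ => ENNReal.ofReal ‖h p‖)
      ((volume.restrict B').prod (volume.restrict Ann)) := by
    rw [Measure.prod_restrict, ← Measure.volume_eq_prod]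
    exact ENNReal.measurable_ofReal.comp_aemeasurable
      (((hhcont.mono (prod_mono Subset.rfl hAnnSub)).norm).aemeasurable (hB'meas.prod hAnnMeas))
  have tonelli : ∫⁻ p in B' ×ˢ Ann, ENNReal.ofReal ‖h p‖
      = ∫⁻ ζ in Ann, ∫⁻ u in B', ENNReal.ofReal ‖h (u, ζ)‖ := by
    rw [Measure.volume_eq_prod, ← Measure.prod_restrict]
    exact lintegral_prod_symm _ haem
  -- membership of z'
  have hz'B : z' ∈ B' := by
    rw [hB', mem_ball, dist_zero_right]
    exact lt_of_le_of_lt hz' hθ1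
  -- the polydisc is contained in the unit ball
  set eqv := PiLp.continuousLinearEquiv 2 ℂ (fun _ : Fin (n-1) => ℂ) with heqv
  have hEuc : ∀ v : Fin (n-1) → ℂ, (∀ i, v i ∈ Metric.ball (z' i) δ) → eqv.symm v ∈ B' := by
    intro v hv
    have hd : dist (eqv.symm v) z' < 1 - θ := by
      rw [EuclideanSpace.dist_eq, Real.sqrt_lt' h1θ]
      have hbound : ∀ i, dist ((eqv.symm v) i) (z' i) ^ 2 ≤ δ ^ 2 := by
        intro i
        have h2 := hv i
        rw [mem_ball] at h2
        have h3 : dist ((eqv.symm v) i) (z' i) = dist (v i) (z' i) := rfl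
        rw [h3]
        nlinarith [dist_nonneg (x := v i) (y := z' i)]
      calc ∑ i, dist ((eqv.symm v) i) (z' i) ^ 2 ≤ ∑ _i : Fin (n-1), δ ^ 2 :=
            Finset.sum_le_sum (fun i _ => hbound i)
      _ = ((n-1 : ℕ) : ℝ) * δ ^ 2 := by
          rw [Finset.sum_const, Finset.card_univ, Fintype.card_fin, nsmul_eq_mul]
      _ < (1 - θ)^2 := by
          rw [hδdef, div_pow, mul_div_assoc']
          rw [div_lt_iff₀ (by positivity)]
          have hNc : (0:ℝ) ≤ ((n-1:ℕ):ℝ) := Nat.cast_nonneg _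
          nlinarith [mul_pos h1θ h1θ, sq_nonneg ((n-1:ℕ):ℝ)]
    rw [hB', mem_ball]
    calc dist (eqv.symm v) 0 ≤ dist (eqv.symm v) z' + dist z' 0 := dist_triangle _ _ _
    _ < (1 - θ) + θ := by
        have hz0 : dist z' 0 ≤ θ := by rwa [dist_zero_right]
        linarith
    _ = 1 := by ring
  -- inner (polydisc) bound
  have hinner : ∀ ζ ∈ Ann, ENNReal.ofReal (P * ‖h (z', ζ)‖) ≤
      ∫⁻ u in B', ENNReal.ofReal ‖h (u, ζ)‖ := by
    intro ζ hζ
    have hζΔ : ζ ∈ Metric.ball (0:ℂ) 1 := hAnnSub hζ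
    set g : (Fin (n-1) → ℂ) → ℂ := fun v => h (eqv.symm v, ζ) with hgdef
    have hgdiff : DifferentiableOn ℂ g {v : Fin (n-1) → ℂ | ∀ i, v i ∈ Metric.ball (z' i) δ} := by
      apply hh.comp
      · exact ((eqv.symm.differentiable).prodMk (differentiable_const ζ)).differentiableOn
      · intro v hv
        exact ⟨hEuc v (fun i => hv i), hζΔ⟩
    have hpoly := polydisc_lower (n-1) g (fun i => z' i) ρ δ hρ hρδ hgdiff
    have hgc : g (fun i => z' i) = h (z', ζ) := rfl
    rw [hgc] at hpoly
    rw [← hP] at hpoly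
    refine hpoly.trans ?_
    have hglue : (∫⁻ v in {v : Fin (n-1) → ℂ | ∀ i, v i ∈ Metric.ball (z' i) ρ},
        ENNReal.ofReal ‖g v‖ ∂(volume : Measure (Fin (n-1) → ℂ)))
        = ∫⁻ u in {u : EuclideanSpace ℂ (Fin (n-1)) | ∀ i, u i ∈ Metric.ball (z' i) ρ},
            ENNReal.ofReal ‖h (u, ζ)‖ := by
        have hemb := (MeasurableEquiv.toLp 2 (Fin (n-1) → ℂ)).measurableEmbedding
        show _ = ∫⁻ u in _, _ ∂(Measure.map (MeasurableEquiv.toLp 2 (Fin (n-1) → ℂ)) volume)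
        rw [hemb.restrict_map, hemb.lintegral_map]
        rfl
    rw [hglue]
    apply lintegral_mono_set
    intro u hu
    exact hEuc (fun i => u i) (fun i => ball_subset_ball hρδ.le (hu i))
  -- annulus bound in the last variable
  set g₂ : ℂ → ℂ := fun ζ => h (z', ζ) with hg₂def
  have hg₂diff : DifferentiableOn ℂ g₂ (Metric.ball 0 1) := by
    apply hh.comp
    · exact ((differentiable_const z').prodMk differentiable_id).differentiableOn
    · intro ζ hζ
      exact ⟨hz'B, hζ⟩
  have hwr : ‖w‖ < r := lt_of_le_of_lt hw hθr
  have key : ∀ s ∈ Ioo r R, 2 * π * (r - θ) * ‖g₂ w‖ ≤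
      ∫ t in Ioo (-π) π, s * ‖g₂ (circleMap 0 s t)‖ := by
    intro s hs
    have hs0 : 0 < s := lt_trans (hθ.trans hθr) hs.1
    have hcirc := circ_lower g₂ s hs0 w (hwr.trans hs.1)
      (hg₂diff.mono (closedBall_subset_ball (hs.2.trans hR)))
    refine le_trans ?_ hcirc
    have hle : r - θ ≤ s - ‖w‖ := by
      have := hs.1
      linarith
    exact mul_le_mul_of_nonneg_right (by nlinarith [pi_pos]) (norm_nonneg (g₂ w))
  have hann := ann_lower g₂ 1 r R (by linarith) hrR hR hg₂diff (2*π*(r-θ)*‖g₂ w‖) key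
  rw [tonelli]
  calc ENNReal.ofReal (K * ‖h (z', w)‖)
      = ENNReal.ofReal P * ENNReal.ofReal (2*π*(r-θ)*‖g₂ w‖ * (R - r)) := by
        rw [← ENNReal.ofReal_mul hPpos.le]
        congr 1
        rw [hK, hg₂def]
        ring
    _ ≤ ENNReal.ofReal P * ∫⁻ ζ in Ann, ENNReal.ofReal ‖g₂ ζ‖ := mul_le_mul_right hann _
    _ = ∫⁻ ζ in Ann, ENNReal.ofReal P * ENNReal.ofReal ‖g₂ ζ‖ := by
        rw [lintegral_const_mul' _ _ ENNReal.ofReal_ne_top]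
    _ = ∫⁻ ζ in Ann, ENNReal.ofReal (P * ‖g₂ ζ‖) := by
        apply lintegral_congr
        intro ζ
        rw [ENNReal.ofReal_mul hPpos.le]
    _ ≤ ∫⁻ ζ in Ann, ∫⁻ u in B', ENNReal.ofReal ‖h (u, ζ)‖ :=
        setLIntegral_mono' hAnnMeas hinner

end
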